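/- arXiv:2505.03235 — 2 statements merged into one kernel-verified Lean document; each statement's English description precedes it below -/
import Mathlib

section
/- Let S and T be closed densely defined operators on a Hilbert space K which commute strongly, i.e. the von Neumann algebra generated by S commutes with the von Neumann algebra generated by T (where for a closed operator A with polar decomposition A = U H, the von Neumann algebra generated by A is the one generated by the partial isometry U and the bounded operator (1+H)^{-1}). If ξ ∈ Dom(ST) ∩ Dom(S), then ξ ∈ Dom(TS) and S T ξ = T S ξ. -/
open ContinuousLinearMap

noncomputable section

variable {K : Type*} [NormedAddCommGroup K] [InnerProductSpace ℂ K] [CompleteSpace K]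

/-- The data of the polar decomposition `A = U ∘ Hm` of a closed densely defined operator `A`:
`Hm = |A|` is a positive self-adjoint operator with the same domain as `A`, `U` is a partial
isometry whose initial space is the closure of the range of `Hm` (so that the decomposition is
the canonical one), and `R = (1 + Hm)⁻¹` is the bounded resolvent. -/
structure PolarData (A : K →ₗ.[ℂ] K) where
  U : K →L[ℂ] K
  Hm : K →ₗ.[ℂ] K
  R : K →L[ℂ] K
  domain_eq : Hm.domain = A.domain
  factor : ∀ (x : K) (hx : x ∈ Hm.domain) (hx' : x ∈ A.domain),
    A ⟨x, hx'⟩ = U (Hm ⟨x, hx⟩)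
  selfAdjoint : Hm.adjoint = Hm
  positive : ∀ (x : K) (hx : x ∈ Hm.domain), 0 ≤ (inner ℂ (Hm ⟨x, hx⟩) x : ℂ).re
  partialIsometry : U ∘L (adjoint U) ∘L U = U
  resolvent_left : ∀ (x : K) (hx : x ∈ Hm.domain), R (x + Hm ⟨x, hx⟩) = x
  resolvent_right : ∀ y : K, ∃ hy : R y ∈ Hm.domain, R y + Hm ⟨R y, hy⟩ = y
  initial : ∀ (x : K) (hx : x ∈ Hm.domain), (adjoint U) (U (Hm ⟨x, hx⟩)) = Hm ⟨x, hx⟩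
  kernel : ∀ y : K,
    (∀ (x : K) (hx : x ∈ Hm.domain), (inner ℂ y (Hm ⟨x, hx⟩) : ℂ) = 0) → U y = 0

/-- The von Neumann algebra `{A}''` generated by a closed densely defined operator `A`,
i.e. the double commutant of the partial isometry `U` and the bounded operator
`(1 + |A|)⁻¹` coming from the polar decomposition of `A` (together with their adjoints). -/
def generatedVN {A : K →ₗ.[ℂ] K} (pd : PolarData A) : Set (K →L[ℂ] K) :=
  Set.centralizer (Set.centralizer {pd.U, pd.R, adjoint pd.U, adjoint pd.R})

/-- Applying a partial linear map to propositionally equal points. -/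
lemma pmap_congr (f : K →ₗ.[ℂ] K) {a b : K} (ha : a ∈ f.domain) (hb : b ∈ f.domain)
    (h : a = b) : f ⟨a, ha⟩ = f ⟨b, hb⟩ := by subst h; rfl

/-- If a bounded operator `B` commutes with `U` and `R` from the polar decomposition of `A`,
then `B` preserves the domain of `A` and commutes with `A` on it. -/
lemma PolarData.comm_aux {A : K →ₗ.[ℂ] K} (pd : PolarData A) (B : K →L[ℂ] K)
    (hR : ∀ y, B (pd.R y) = pd.R (B y)) (hU : ∀ y, B (pd.U y) = pd.U (B y))
    (x : K) (hx : x ∈ A.domain) :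
    ∃ hBx : B x ∈ A.domain, A ⟨B x, hBx⟩ = B (A ⟨x, hx⟩) := by
  have hx' : x ∈ pd.Hm.domain := pd.domain_eq.symm ▸ hx
  set y := x + pd.Hm ⟨x, hx'⟩ with hy
  have hRy : pd.R y = x := pd.resolvent_left x hx'
  obtain ⟨hmem, heq⟩ := pd.resolvent_right (B y)
  have hRBy : pd.R (B y) = B x := by rw [← hR y, hRy]
  have hBx' : B x ∈ pd.Hm.domain := hRBy ▸ hmem
  have hBx : B x ∈ A.domain := pd.domain_eq ▸ hBx'
  refine ⟨hBx, ?_⟩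
  have h1 : pd.Hm ⟨B x, hBx'⟩ = B (pd.Hm ⟨x, hx'⟩) := by
    have h2 : pd.Hm ⟨B x, hBx'⟩ = pd.Hm ⟨pd.R (B y), hmem⟩ :=
      pmap_congr _ _ _ hRBy.symm
    have h3 : pd.Hm ⟨pd.R (B y), hmem⟩ = B y - pd.R (B y) :=
      eq_sub_of_add_eq' heq
    rw [h2, h3, hRBy, hy, map_add]
    abel
  rw [pd.factor (B x) hBx' hBx, pd.factor x hx' hx, h1, hU]

/-- If `S` and `T` are closed densely defined operators on a Hilbert space which commute
strongly (the von Neumann algebras they generate commute elementwise), and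
`ξ ∈ Dom(ST) ∩ Dom(S)`, then `ξ ∈ Dom(TS)` and `STξ = TSξ`. -/
theorem statement0 (S T : K →ₗ.[ℂ] K)
    (hSdense : Dense (S.domain : Set K)) (hTdense : Dense (T.domain : Set K))
    (hSclosed : S.IsClosed) (hTclosed : T.IsClosed)
    (pdS : PolarData S) (pdT : PolarData T)
    (hcomm : ∀ a ∈ generatedVN pdS, ∀ b ∈ generatedVN pdT, Commute a b)
    (ξ : K) (hξT : ξ ∈ T.domain) (hξS : ξ ∈ S.domain)
    (hTξ : T ⟨ξ, hξT⟩ ∈ S.domain) :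
    ∃ hSξ : S ⟨ξ, hξS⟩ ∈ T.domain,
      S ⟨T ⟨ξ, hξT⟩, hTξ⟩ = T ⟨S ⟨ξ, hξS⟩, hSξ⟩ := by
  -- generators belong to the generated von Neumann algebras
  have hsubS : ({pdS.U, pdS.R, adjoint pdS.U, adjoint pdS.R} : Set (K →L[ℂ] K)) ⊆
      generatedVN pdS := Set.subset_centralizer_centralizer
  have hsubT : ({pdT.U, pdT.R, adjoint pdT.U, adjoint pdT.R} : Set (K →L[ℂ] K)) ⊆
      generatedVN pdT := Set.subset_centralizer_centralizer
  -- pointwise commutation of a generator of T's algebra with R_S and U_S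
  have key : ∀ b ∈ ({pdT.U, pdT.R, adjoint pdT.U, adjoint pdT.R} : Set (K →L[ℂ] K)),
      (∀ y, b (pdS.R y) = pdS.R (b y)) ∧ (∀ y, b (pdS.U y) = pdS.U (b y)) := by
    intro b hb
    have hR := hcomm pdS.R (hsubS (by simp)) b (hsubT hb)
    have hU := hcomm pdS.U (hsubS (by simp)) b (hsubT hb)
    constructor
    · intro y
      calc b (pdS.R y) = (b * pdS.R) y := rfl
        _ = (pdS.R * b) y := by rw [← hR.eq]
        _ = pdS.R (b y) := rfl
    · intro y
      calc b (pdS.U y) = (b * pdS.U) y := rfl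
        _ = (pdS.U * b) y := by rw [← hU.eq]
        _ = pdS.U (b y) := rfl
  obtain ⟨hRc, hRc'⟩ := key pdT.R (by simp)
  obtain ⟨hUc, hUc'⟩ := key pdT.U (by simp)
  obtain ⟨hUac, hUac'⟩ := key (adjoint pdT.U) (by simp)
  -- setup
  have hHT : ξ ∈ pdT.Hm.domain := pdT.domain_eq.symm ▸ hξT
  set η := pdT.Hm ⟨ξ, hHT⟩ with hη_def
  -- T ξ = U_T η
  have hTfac : T ⟨ξ, hξT⟩ = pdT.U η := pdT.factor ξ hHT hξT
  -- η ∈ Dom S, since η = U_T* (T ξ) and T ξ ∈ Dom S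
  have hη_eq : η = adjoint pdT.U (T ⟨ξ, hξT⟩) := by
    rw [hTfac, pdT.initial ξ hHT]
  obtain ⟨hηS', _⟩ := pdS.comm_aux (adjoint pdT.U) hUac hUac' (T ⟨ξ, hξT⟩) hTξ
  have hηS : η ∈ S.domain := hη_eq ▸ hηS'
  -- z = ξ + η ∈ Dom S, with R_T z = ξ
  set z := ξ + η with hz_def
  have hzS : z ∈ S.domain := S.domain.add_mem hξS hηS
  have hRz : pdT.R z = ξ := pdT.resolvent_left ξ hHT
  set Sz := S ⟨z, hzS⟩ with hSz_def
  -- S ξ = R_T Sz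
  obtain ⟨hRzS, hRzSeq⟩ := pdS.comm_aux pdT.R hRc hRc' z hzS
  have hSξ_eq : S ⟨ξ, hξS⟩ = pdT.R Sz := by
    rw [← pmap_congr S hRzS hξS hRz, hRzSeq]
  -- membership: S ξ ∈ Dom T
  obtain ⟨hmemT, heqT⟩ := pdT.resolvent_right Sz
  have hSξHm : S ⟨ξ, hξS⟩ ∈ pdT.Hm.domain := by rw [hSξ_eq]; exact hmemT
  have hSξ : S ⟨ξ, hξS⟩ ∈ T.domain := pdT.domain_eq ▸ hSξHm
  refine ⟨hSξ, ?_⟩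
  -- Hm_T (S ξ) = Sz - R_T Sz
  have hHmSξ : pdT.Hm ⟨S ⟨ξ, hξS⟩, hSξHm⟩ = Sz - pdT.R Sz := by
    rw [pmap_congr pdT.Hm hSξHm hmemT hSξ_eq]
    exact eq_sub_of_add_eq' heqT
  -- T (S ξ) = U_T (Sz - R_T Sz)
  have hTSξ : T ⟨S ⟨ξ, hξS⟩, hSξ⟩ = pdT.U (Sz - pdT.R Sz) := by
    rw [pdT.factor _ hSξHm hSξ, hHmSξ]
  -- S η = Sz - S ξ
  have hSη : S ⟨η, hηS⟩ = Sz - S ⟨ξ, hξS⟩ := by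
    have hsub : z - ξ ∈ S.domain := S.domain.sub_mem hzS hξS
    have h1 : S ⟨η, hηS⟩ = S ⟨z - ξ, hsub⟩ := pmap_congr S hηS hsub (by rw [hz_def]; abel)
    have h2 : (⟨z - ξ, hsub⟩ : S.domain) = ⟨z, hzS⟩ - ⟨ξ, hξS⟩ := rfl
    rw [h1, h2, S.map_sub]
  -- S (T ξ) = U_T (S η)
  obtain ⟨hUη, hUηeq⟩ := pdS.comm_aux pdT.U hUc hUc' η hηS
  calc S ⟨T ⟨ξ, hξT⟩, hTξ⟩ = S ⟨pdT.U η, hUη⟩ := pmap_congr S hTξ hUη hTfac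
    _ = pdT.U (S ⟨η, hηS⟩) := hUηeq
    _ = pdT.U (Sz - pdT.R Sz) := by rw [hSη, hSξ_eq]
    _ = T ⟨S ⟨ξ, hξS⟩, hSξ⟩ := hTSξ.symm
end
end

section
/- Let D be a positive self-adjoint operator on a Hilbert space H, let ξ, η ∈ H, and let δ > 0. If ⟨e^{itD} ξ, η⟩ = 0 for all real t ∈ (-δ, δ), then ⟨e^{itD} ξ, η⟩ = 0 for all t ∈ ℝ. -/
open ContinuousLinearMap MeasureTheory

noncomputable section

variable {H : Type*} [NormedAddCommGroup H] [InnerProductSpace ℂ H] [CompleteSpace H]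

section Aux

open Complex Metric MeasureTheory

lemma auxT_ae (m : Measure ℝ) (hm : m (Set.Iio 0) = 0) : ∀ᵐ l ∂m, 0 ≤ l := by
  rw [MeasureTheory.ae_iff]
  convert hm using 2
  ext l
  simp [not_le]

lemma auxT_norm {z : ℂ} (hz : 0 ≤ z.im) {l : ℝ} (hl : 0 ≤ l) :
    ‖Complex.exp (Complex.I * z * l)‖ ≤ 1 := by
  rw [Complex.norm_exp]
  have : (Complex.I * z * l).re = -(z.im * l) := by
    simp [Complex.mul_re, Complex.mul_im]
  rw [this, Real.exp_le_one_iff]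
  simp only [neg_nonpos]
  exact mul_nonneg hz hl

lemma auxT_meas (m : Measure ℝ) (z : ℂ) :
    AEStronglyMeasurable (fun l : ℝ => Complex.exp (Complex.I * z * l)) m :=
  (Complex.continuous_exp.comp (continuous_const.mul Complex.continuous_ofReal)).aestronglyMeasurable

lemma auxT_int (m : Measure ℝ) [IsFiniteMeasure m] (hm : m (Set.Iio 0) = 0)
    {z : ℂ} (hz : 0 ≤ z.im) :
    Integrable (fun l : ℝ => Complex.exp (Complex.I * z * l)) m := by
  refine (integrable_const (1:ℝ)).mono' (auxT_meas m z) ?_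
  filter_upwards [auxT_ae m hm] with l hl
  exact auxT_norm hz hl

lemma auxT_bound (m : Measure ℝ) [IsFiniteMeasure m] (hm : m (Set.Iio 0) = 0)
    {z : ℂ} (hz : 0 ≤ z.im) :
    ‖∫ l : ℝ, Complex.exp (Complex.I * z * l) ∂m‖ ≤ (m Set.univ).toReal := by
  have := norm_integral_le_of_norm_le_const (μ := m)
    (f := fun l : ℝ => Complex.exp (Complex.I * z * l)) (C := 1) ?_
  · simpa [Measure.real] using this
  · filter_upwards [auxT_ae m hm] with l hl
    exact auxT_norm hz hl

lemma auxT_cont (m : Measure ℝ) [IsFiniteMeasure m] (hm : m (Set.Iio 0) = 0) :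
    ContinuousOn (fun z : ℂ => ∫ l : ℝ, Complex.exp (Complex.I * z * l) ∂m)
      {z : ℂ | 0 ≤ z.im} := by
  apply continuousOn_of_dominated (bound := fun _ => (1:ℝ))
  · exact fun z _ => auxT_meas m z
  · intro z hz
    filter_upwards [auxT_ae m hm] with l hl
    exact auxT_norm hz hl
  · exact integrable_const 1
  · refine Filter.Eventually.of_forall fun l => ?_
    exact ((Complex.continuous_exp.comp
      ((continuous_const.mul continuous_id).mul continuous_const))).continuousOn

lemma auxT_diff (m : Measure ℝ) [IsFiniteMeasure m] (hm : m (Set.Iio 0) = 0)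
    {z₀ : ℂ} (hz₀ : 0 < z₀.im) :
    DifferentiableAt ℂ (fun z : ℂ => ∫ l : ℝ, Complex.exp (Complex.I * z * l) ∂m) z₀ := by
  set ε : ℝ := z₀.im / 2 with hε
  have hεpos : 0 < ε := by positivity
  have him : ∀ z ∈ ball z₀ ε, ε ≤ z.im := by
    intro z hz
    have h1 : |(z - z₀).im| ≤ ‖z - z₀‖ := Complex.abs_im_le_norm _
    have h2 : ‖z - z₀‖ < ε := by
      rwa [mem_ball, Complex.dist_eq] at hz
    have := abs_le.1 h1
    simp only [Complex.sub_im] at this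
    nlinarith [this.1]
  have hF'_meas : AEStronglyMeasurable
      (fun l : ℝ => Complex.exp (Complex.I * z₀ * l) * (Complex.I * l)) m := by
    apply Continuous.aestronglyMeasurable
    exact (Complex.continuous_exp.comp (continuous_const.mul Complex.continuous_ofReal)).mul
      (continuous_const.mul Complex.continuous_ofReal)
  have h_bound : ∀ᵐ (l : ℝ) ∂m, ∀ z ∈ ball z₀ ε,
      ‖Complex.exp (Complex.I * z * l) * (Complex.I * l)‖ ≤ ε⁻¹ := by
    filter_upwards [auxT_ae m hm] with l hl
    intro z hz
    have himz : ε ≤ z.im := him z hz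
    have hnorm : ‖Complex.exp (Complex.I * z * l) * (Complex.I * (l:ℂ))‖
        = Real.exp (-(z.im * l)) * l := by
      rw [norm_mul, norm_mul, Complex.norm_exp, Complex.norm_I,
        Complex.norm_real, Real.norm_eq_abs, _root_.abs_of_nonneg hl]
      have : (Complex.I * z * l).re = -(z.im * l) := by simp [Complex.mul_re, Complex.mul_im]
      rw [this]; ring
    rw [hnorm]
    have h1 : Real.exp (-(z.im * l)) ≤ Real.exp (-(ε * l)) := by
      apply Real.exp_le_exp.2
      nlinarith
    have h2 : Real.exp (-(ε * l)) * l ≤ ε⁻¹ := by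
      have he : ε * l ≤ Real.exp (ε * l) := by
        have := Real.add_one_le_exp (ε * l); linarith
      have hepos := Real.exp_pos (ε * l)
      have hcl : ε * l * ε⁻¹ = l := by field_simp
      rw [Real.exp_neg, inv_mul_le_iff₀ hepos]
      nlinarith [mul_le_mul_of_nonneg_right he (inv_nonneg.2 hεpos.le)]
    calc Real.exp (-(z.im * l)) * l ≤ Real.exp (-(ε * l)) * l := by
          apply mul_le_mul_of_nonneg_right h1 hl
      _ ≤ ε⁻¹ := h2
  have h_diff : ∀ᵐ (l : ℝ) ∂m, ∀ z ∈ ball z₀ ε,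
      HasDerivAt (fun z : ℂ => Complex.exp (Complex.I * z * l))
        (Complex.exp (Complex.I * z * l) * (Complex.I * l)) z := by
    filter_upwards with l
    intro z _
    have h0 : HasDerivAt (fun z : ℂ => Complex.I * z * l) (Complex.I * l) z := by
      simpa using ((hasDerivAt_id z).const_mul Complex.I).mul_const (l:ℂ)
    exact h0.cexp
  have key := hasDerivAt_integral_of_dominated_loc_of_deriv_le (μ := m)
    (F := fun (z : ℂ) (l : ℝ) => Complex.exp (Complex.I * z * l))
    (F' := fun (z : ℂ) (l : ℝ) => Complex.exp (Complex.I * z * l) * (Complex.I * l))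
    (x₀ := z₀) (bound := fun _ => ε⁻¹) (ball_mem_nhds z₀ hεpos)
    (Filter.Eventually.of_forall fun z => auxT_meas m z)
    (auxT_int m hm hz₀.le) hF'_meas h_bound (integrable_const _) h_diff
  exact key.2.differentiableAt

open Complex Metric

noncomputable def psiMap (ζ : ℂ) : ℂ := Complex.I * (1 + ζ) / (1 - ζ)

lemma psi_im {ζ : ℂ} : (psiMap ζ).im = (1 - Complex.normSq ζ) / Complex.normSq (1 - ζ) := by
  unfold psiMap
  rw [Complex.div_im]
  simp only [Complex.normSq_apply, Complex.mul_re, Complex.mul_im, Complex.add_re,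
    Complex.add_im, Complex.sub_re, Complex.sub_im, Complex.one_re, Complex.one_im,
    Complex.I_re, Complex.I_im]
  ring

lemma psi_re {ζ : ℂ} : (psiMap ζ).re = (-2 * ζ.im) / Complex.normSq (1 - ζ) := by
  unfold psiMap
  rw [Complex.div_re]
  simp only [Complex.normSq_apply, Complex.mul_re, Complex.mul_im, Complex.add_re,
    Complex.add_im, Complex.sub_re, Complex.sub_im, Complex.one_re, Complex.one_im,
    Complex.I_re, Complex.I_im]
  ring

lemma psi_im_nonneg {ζ : ℂ} (h1 : ‖ζ‖ ≤ 1) : 0 ≤ (psiMap ζ).im := by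
  rw [psi_im]
  apply div_nonneg
  · have : Complex.normSq ζ ≤ 1 := by
      rw [← Complex.sq_norm]
      nlinarith [norm_nonneg ζ, h1]
    linarith
  · exact Complex.normSq_nonneg _

lemma psi_im_pos {ζ : ℂ} (h1 : ‖ζ‖ < 1) : 0 < (psiMap ζ).im := by
  rw [psi_im]
  apply div_pos
  · have : Complex.normSq ζ < 1 := by
      rw [← Complex.sq_norm]
      nlinarith [norm_nonneg ζ, h1]
    linarith
  · rw [Complex.normSq_pos, sub_ne_zero]
    intro h
    rw [← h] at h1
    simp at h1

lemma psi_im_zero {ζ : ℂ} (h1 : ‖ζ‖ = 1) (h2 : ζ ≠ 1) : (psiMap ζ).im = 0 := by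
  rw [psi_im]
  have : Complex.normSq ζ = 1 := by
    rw [← Complex.sq_norm, h1]; norm_num
  rw [this]
  simp

lemma psi_diffAt {ζ : ℂ} (h : ζ ≠ 1) : DifferentiableAt ℂ psiMap ζ := by
  unfold psiMap
  apply DifferentiableAt.div
  · fun_prop
  · fun_prop
  · rw [sub_ne_zero]; exact fun hc => h hc.symm

lemma psi_contAt {ζ : ℂ} (h : ζ ≠ 1) : ContinuousAt psiMap ζ :=
  (psi_diffAt h).continuousAt

lemma psi_surj {w : ℂ} (hw : 0 < w.im) :
    ∃ ζ : ℂ, ‖ζ‖ < 1 ∧ psiMap ζ = w := by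
  have hwI : w + Complex.I ≠ 0 := by
    intro h
    have := congrArg Complex.im h
    simp at this
    linarith
  refine ⟨(w - Complex.I) / (w + Complex.I), ?_, ?_⟩
  · rw [norm_div, div_lt_one (norm_pos_iff.2 hwI)]
    rw [Complex.norm_def, Complex.norm_def]
    apply Real.sqrt_lt_sqrt (Complex.normSq_nonneg _)
    simp only [Complex.normSq_apply, Complex.sub_re, Complex.sub_im, Complex.add_re,
      Complex.add_im, Complex.I_re, Complex.I_im]
    nlinarith
  · have hζ1 : (1 : ℂ) - (w - Complex.I) / (w + Complex.I) ≠ 0 := by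
      rw [sub_ne_zero]
      intro h
      rw [eq_comm, div_eq_one_iff_eq hwI] at h
      have := congrArg Complex.im h
      simp at this
      linarith
    unfold psiMap
    field_simp
    ring

lemma cwa_prod {ι : Type*} (t : Finset ι) (f : ι → ℂ → ℂ) (s : Set ℂ) (x : ℂ)
    (h : ∀ i ∈ t, ContinuousWithinAt (f i) s x) :
    ContinuousWithinAt (fun z => ∏ i ∈ t, f i z) s x := by
  classical
  induction t using Finset.induction with
  | empty => simpa using continuousWithinAt_const
  | insert _ _ hni ih =>
    rename_i a u
    simp only [Finset.prod_insert hni]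
    exact (h a (Finset.mem_insert_self a u)).mul
      (ih fun i hi => h i (Finset.mem_insert_of_mem hi))

lemma vanish_on_line (G : ℂ → ℂ) (M : ℝ)
    (hdiff : ∀ z : ℂ, 0 < z.im → DifferentiableAt ℂ G z)
    (hcont : ContinuousOn G {z : ℂ | 0 ≤ z.im})
    (hbdd : ∀ z : ℂ, 0 ≤ z.im → ‖G z‖ ≤ M)
    {δ : ℝ} (hδ : 0 < δ)
    (h0 : ∀ t : ℝ, -δ < t → t < δ → G (t : ℂ) = 0) :
    ∀ t : ℝ, G (t : ℂ) = 0 := by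
  classical
  have hM0 : 0 ≤ M := le_trans (norm_nonneg _) (hbdd Complex.I (by simp))
  set f : ℂ → ℂ := fun ζ => if ζ = 1 then 0 else G (psiMap ζ) with hf_def
  -- basic facts about f
  have hfbdd : ∀ ζ ∈ closedBall (0:ℂ) 1, ‖f ζ‖ ≤ M := by
    intro ζ hζ
    rw [mem_closedBall_zero_iff] at hζ
    by_cases h1 : ζ = 1
    · simp [hf_def, h1, hM0]
    · simp only [hf_def, if_neg h1]
      exact hbdd _ (psi_im_nonneg hζ)
  -- the open set U of the circle where f vanishes
  set U : Set ℂ := {ζ : ℂ | ζ ≠ 1} ∩ psiMap ⁻¹' {w : ℂ | |w.re| < δ} with hU_def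
  have hUopen : IsOpen U := by
    refine ContinuousOn.isOpen_inter_preimage ?_ isOpen_ne ?_
    · exact fun ζ hζ => (psi_contAt hζ).continuousWithinAt
    · exact isOpen_lt Complex.continuous_re.abs continuous_const
  have hUne1 : ∀ ζ ∈ U, ζ ≠ 1 := fun ζ hζ => hζ.1
  have hUneg1 : (-1 : ℂ) ∈ U := by
    constructor
    · intro h
      have := congrArg Complex.re h
      norm_num at this
    · show |(psiMap (-1)).re| < δ
      have : psiMap (-1) = 0 := by
        unfold psiMap
        norm_num
      rw [this]
      simpa using hδ
  have hUzero : ∀ ζ ∈ U, ‖ζ‖ = 1 → f ζ = 0 := by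
    intro ζ hζ hn
    have hne1 : ζ ≠ 1 := hζ.1
    have him : (psiMap ζ).im = 0 := psi_im_zero hn hne1
    have hre : |(psiMap ζ).re| < δ := hζ.2
    have heq : psiMap ζ = ((psiMap ζ).re : ℂ) := by
      apply Complex.ext <;> simp [him]
    simp only [hf_def, if_neg hne1]
    rw [heq]
    rcases abs_lt.1 hre with ⟨hl, hr⟩
    exact h0 _ hl hr
  -- covering the circle by rotations of U
  have hcover : Metric.sphere (0:ℂ) 1 ⊆
      ⋃ u : (Metric.sphere (0:ℂ) 1), {z : ℂ | (u:ℂ) * z ∈ U} := by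
    intro p hp
    have hp1 : ‖p‖ = 1 := mem_sphere_zero_iff_norm.1 hp
    have hpne : p ≠ 0 := by
      intro h; rw [h] at hp1; simp at hp1
    refine Set.mem_iUnion.2 ⟨⟨-p⁻¹, ?_⟩, ?_⟩
    · rw [mem_sphere_zero_iff_norm, norm_neg, norm_inv, hp1]; norm_num
    · show -p⁻¹ * p ∈ U
      have : -p⁻¹ * p = -1 := by field_simp
      rw [this]; exact hUneg1
  obtain ⟨t, ht⟩ := (isCompact_sphere (0:ℂ) 1).elim_finite_subcover
    (fun u : (Metric.sphere (0:ℂ) 1) => {z : ℂ | (u:ℂ) * z ∈ U})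
    (fun u => hUopen.preimage (continuous_const.mul continuous_id)) hcover
  -- the product function g
  set g : ℂ → ℂ := fun z => ∏ u ∈ t, f ((u:ℂ) * z) with hg_def
  -- continuity of each factor at points where u*z₀ ≠ 1
  have hfac_cwa : ∀ u : ℂ, ‖u‖ = 1 → ∀ z₀ ∈ closedBall (0:ℂ) 1, u * z₀ ≠ 1 →
      ContinuousWithinAt (fun z => f (u * z)) (closedBall (0:ℂ) 1) z₀ := by
    intro u hu z₀ hz₀ hne
    have hmain : ContinuousWithinAt (fun z => G (psiMap (u * z))) (closedBall (0:ℂ) 1) z₀ := by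
      apply ContinuousWithinAt.comp (t := {z : ℂ | 0 ≤ z.im})
      · apply hcont
        rw [mem_closedBall_zero_iff] at hz₀
        refine psi_im_nonneg ?_
        rw [norm_mul, hu, one_mul]; exact hz₀
      · exact ((psi_contAt hne).comp (continuous_const.mul continuous_id).continuousAt).continuousWithinAt
      · intro z hz
        rw [mem_closedBall_zero_iff] at hz
        refine psi_im_nonneg ?_
        rw [norm_mul, hu, one_mul]; exact hz
    apply hmain.congr_of_eventuallyEq
    · have hV : {z : ℂ | u * z ≠ 1} ∈ nhdsWithin z₀ (closedBall (0:ℂ) 1) := by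
        apply mem_nhdsWithin_of_mem_nhds
        exact (isOpen_ne.preimage (continuous_const.mul continuous_id)).mem_nhds hne
      filter_upwards [hV] with z hz
      simp only [hf_def, if_neg hz]
    · simp only [hf_def, if_neg hne]
  -- continuity of g
  have hgc : ContinuousOn g (closedBall (0:ℂ) 1) := by
    intro z₀ hz₀
    by_cases hA : ∀ u ∈ t, (u:ℂ) * z₀ ≠ 1
    · exact cwa_prod t _ _ z₀ fun u hu =>
        hfac_cwa u (mem_sphere_zero_iff_norm.1 u.2) z₀ hz₀ (hA u hu)
    · push_neg at hA
      obtain ⟨j, hjt, hj1⟩ := hA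
      have hz₀n : ‖z₀‖ = 1 := by
        have h1 : ‖(j:ℂ) * z₀‖ = 1 := by rw [hj1]; simp
        rwa [norm_mul, mem_sphere_zero_iff_norm.1 j.2, one_mul] at h1
      have hz₀s : z₀ ∈ Metric.sphere (0:ℂ) 1 := mem_sphere_zero_iff_norm.2 hz₀n
      obtain ⟨i₀, hi₀⟩ := Set.mem_iUnion.1 (ht hz₀s)
      simp only [Set.mem_iUnion, exists_prop] at hi₀
      obtain ⟨hi₀t, hi₀U⟩ := hi₀
      have hi₀n : ‖(i₀:ℂ) * z₀‖ = 1 := by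
        rw [norm_mul, mem_sphere_zero_iff_norm.1 i₀.2, one_mul, hz₀n]
      have hi₀ne1 : (i₀:ℂ) * z₀ ≠ 1 := hUne1 _ hi₀U
      have hfz : f ((i₀:ℂ) * z₀) = 0 := hUzero _ hi₀U hi₀n
      have hg0 : g z₀ = 0 := Finset.prod_eq_zero hi₀t hfz
      show ContinuousWithinAt g (closedBall (0:ℂ) 1) z₀
      rw [ContinuousWithinAt, hg0]
      have hb : ∀ᶠ z in nhdsWithin z₀ (closedBall (0:ℂ) 1),
          ‖g z‖ ≤ M ^ (t.erase i₀).card * ‖f ((i₀:ℂ) * z)‖ := by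
        filter_upwards [self_mem_nhdsWithin] with z hz
        have h1 : ‖g z‖ = (∏ u ∈ t.erase i₀, ‖f ((u:ℂ) * z)‖) * ‖f ((i₀:ℂ) * z)‖ := by
          simp only [hg_def]
          rw [← Finset.prod_erase_mul t (fun u => f ((u:ℂ) * z)) hi₀t, norm_mul, norm_prod]
        rw [h1]
        apply mul_le_mul_of_nonneg_right _ (norm_nonneg _)
        calc (∏ u ∈ t.erase i₀, ‖f ((u:ℂ) * z)‖)
            ≤ ∏ _u ∈ t.erase i₀, M := by
              apply Finset.prod_le_prod (fun _ _ => norm_nonneg _)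
              intro u _
              apply hfbdd
              rw [mem_closedBall_zero_iff, norm_mul,
                mem_sphere_zero_iff_norm.1 u.2, one_mul]
              rwa [mem_closedBall_zero_iff] at hz
          _ = M ^ (t.erase i₀).card := Finset.prod_const M
      have hbt : Filter.Tendsto (fun z => M ^ (t.erase i₀).card * ‖f ((i₀:ℂ) * z)‖)
          (nhdsWithin z₀ (closedBall (0:ℂ) 1)) (nhds 0) := by
        have := (hfac_cwa (i₀:ℂ) (mem_sphere_zero_iff_norm.1 i₀.2) z₀ hz₀ hi₀ne1).norm
        rw [ContinuousWithinAt] at this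
        have h2 := this.const_mul (M ^ (t.erase i₀).card)
        simpa [hfz] using h2
      exact squeeze_zero_norm' hb hbt
  -- differentiability of g on the open ball
  have hfac_diff : ∀ u : ℂ, ‖u‖ = 1 → ∀ z₀ ∈ ball (0:ℂ) 1,
      DifferentiableAt ℂ (fun z => f (u * z)) z₀ := by
    intro u hu z₀ hz₀
    rw [mem_ball_zero_iff] at hz₀
    have hn : ‖u * z₀‖ < 1 := by rw [norm_mul, hu, one_mul]; exact hz₀
    have hne : u * z₀ ≠ 1 := by
      intro h; rw [h] at hn; simp at hn
    have hmain : DifferentiableAt ℂ (fun z => G (psiMap (u * z))) z₀ := by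
      have h1 : DifferentiableAt ℂ (fun z : ℂ => u * z) z₀ := by fun_prop
      have h2 : DifferentiableAt ℂ psiMap (u * z₀) := psi_diffAt hne
      have h3 : DifferentiableAt ℂ G (psiMap (u * z₀)) := hdiff _ (psi_im_pos hn)
      have := (h3.comp (u * z₀) h2).comp z₀ h1
      simpa [Function.comp_def] using this
    apply hmain.congr_of_eventuallyEq
    have hV : {z : ℂ | u * z ≠ 1} ∈ nhds z₀ :=
      (isOpen_ne.preimage (continuous_const.mul continuous_id)).mem_nhds hne
    filter_upwards [hV] with z hz
    simp only [hf_def, if_neg hz]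
  have hgd : DifferentiableOn ℂ g (ball (0:ℂ) 1) := by
    intro z₀ hz₀
    apply DifferentiableAt.differentiableWithinAt
    rw [hg_def]
    apply DifferentiableAt.fun_finsetProd
    intro u hu
    exact hfac_diff u (mem_sphere_zero_iff_norm.1 u.2) z₀ hz₀
  -- g vanishes on the sphere
  have hgsphere : ∀ z ∈ Metric.sphere (0:ℂ) 1, g z = 0 := by
    intro z hz
    obtain ⟨i₀, hi₀⟩ := Set.mem_iUnion.1 (ht hz)
    simp only [Set.mem_iUnion, exists_prop] at hi₀
    obtain ⟨hi₀t, hi₀U⟩ := hi₀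
    refine Finset.prod_eq_zero hi₀t (hUzero _ hi₀U ?_)
    rw [norm_mul, mem_sphere_zero_iff_norm.1 i₀.2, one_mul, mem_sphere_zero_iff_norm.1 hz]
  -- maximum modulus: g vanishes on the closed ball
  have hgzero : ∀ z ∈ closedBall (0:ℂ) 1, g z = 0 := by
    intro z hz
    have hdc : DiffContOnCl ℂ g (ball (0:ℂ) 1) := by
      refine ⟨hgd, ?_⟩
      rwa [closure_ball (0:ℂ) one_ne_zero]
    have := Complex.norm_le_of_forall_mem_frontier_norm_le (U := ball (0:ℂ) 1)
      isBounded_ball hdc (C := 0) ?_ (z := z) ?_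
    · simpa using norm_le_zero_iff.1 this
    · intro w hw
      rw [frontier_ball (0:ℂ) one_ne_zero] at hw
      simp [hgsphere w hw]
    · rwa [closure_ball (0:ℂ) one_ne_zero]
  -- some factor vanishes identically via the identity theorem
  have hGupper : ∀ w : ℂ, 0 < w.im → G w = 0 := by
    by_cases hev : ∃ i ∈ t, ∀ᶠ z in nhds (0:ℂ), f ((i:ℂ) * z) = 0
    · obtain ⟨i, hit, hiev⟩ := hev
      have hanal : AnalyticOnNhd ℂ (fun z => f ((i:ℂ) * z)) (ball (0:ℂ) 1) := by
        apply DifferentiableOn.analyticOnNhd _ isOpen_ball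
        intro z hz
        exact (hfac_diff (i:ℂ) (mem_sphere_zero_iff_norm.1 i.2) z hz).differentiableWithinAt
      have hiz : Set.EqOn (fun z => f ((i:ℂ) * z)) 0 (ball (0:ℂ) 1) :=
        hanal.eqOn_zero_of_preconnected_of_eventuallyEq_zero
          (convex_ball (0:ℂ) 1).isPreconnected (mem_ball_self one_pos) hiev
      have hfzero : ∀ ζ ∈ ball (0:ℂ) 1, f ζ = 0 := by
        intro ζ hζ
        have hin : ‖(i:ℂ)‖ = 1 := mem_sphere_zero_iff_norm.1 i.2
        have hine : (i:ℂ) ≠ 0 := by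
          intro h; rw [h] at hin; simp at hin
        have h1 : (i:ℂ)⁻¹ * ζ ∈ ball (0:ℂ) 1 := by
          rw [mem_ball_zero_iff, norm_mul, norm_inv, hin, inv_one, one_mul]
          rwa [mem_ball_zero_iff] at hζ
        have h2 := hiz h1
        simpa [mul_inv_cancel_left₀ hine] using h2
      intro w hw
      obtain ⟨ζ, hζ1, hζ2⟩ := psi_surj hw
      have hne1 : ζ ≠ 1 := by
        intro h; rw [h] at hζ1; simp at hζ1
      have := hfzero ζ (mem_ball_zero_iff.2 hζ1)
      rw [hf_def] at this
      simp only [if_neg hne1] at this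
      rwa [hζ2] at this
    · exfalso
      push_neg at hev
      have h1 : ∀ i ∈ t, ∀ᶠ z in nhdsWithin (0:ℂ) {(0:ℂ)}ᶜ, f ((i:ℂ) * z) ≠ 0 := by
        intro i hit
        have hanalOn : AnalyticOnNhd ℂ (fun z => f ((i:ℂ) * z)) (ball (0:ℂ) 1) := by
          apply DifferentiableOn.analyticOnNhd _ isOpen_ball
          intro z hz
          exact (hfac_diff (i:ℂ) (mem_sphere_zero_iff_norm.1 i.2) z hz).differentiableWithinAt
        have hanal : AnalyticAt ℂ (fun z => f ((i:ℂ) * z)) 0 :=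
          hanalOn 0 (mem_ball_self one_pos)
        exact hanal.eventually_eq_zero_or_eventually_ne_zero.resolve_left (Filter.not_eventually.2 (hev i hit))
      have h2 : ∀ᶠ z in nhdsWithin (0:ℂ) {(0:ℂ)}ᶜ, ∀ i ∈ t, f ((i:ℂ) * z) ≠ 0 :=
        (Filter.eventually_all_finset t).2 h1
      have h3 : ∀ᶠ z in nhdsWithin (0:ℂ) {(0:ℂ)}ᶜ, z ∈ ball (0:ℂ) 1 :=
        mem_nhdsWithin_of_mem_nhds (isOpen_ball.mem_nhds (by simp))
      obtain ⟨z, hz1, hz2⟩ := (h2.and h3).exists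
      have := hgzero z (ball_subset_closedBall hz2)
      rw [hg_def] at this
      exact (Finset.prod_ne_zero_iff.2 hz1) this
  -- conclusion on the real line
  intro s
  have hmem : (s:ℂ) ∈ {z : ℂ | 0 ≤ z.im} := by simp
  have htend : Filter.Tendsto (fun r : ℝ => (s:ℂ) + r * Complex.I)
      (nhdsWithin 0 (Set.Ioi 0)) (nhdsWithin (s:ℂ) {z : ℂ | 0 ≤ z.im}) := by
    rw [tendsto_nhdsWithin_iff]
    constructor
    · have hco : Continuous (fun r : ℝ => (s:ℂ) + r * Complex.I) := by fun_prop
      have := (hco.tendsto 0).mono_left (nhdsWithin_le_nhds (s := Set.Ioi (0:ℝ)))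
      simpa using this
    · filter_upwards [self_mem_nhdsWithin] with r hr
      simp only [Set.mem_setOf_eq, Complex.add_im, Complex.ofReal_im, Complex.mul_im,
        Complex.ofReal_re, Complex.I_im, Complex.I_re, Complex.ofReal_im]
      simp only [Set.mem_Ioi] at hr
      nlinarith
  have h1 : Filter.Tendsto (fun r : ℝ => G ((s:ℂ) + r * Complex.I))
      (nhdsWithin 0 (Set.Ioi 0)) (nhds (G s)) := (hcont _ hmem).tendsto.comp htend
  have h2 : Filter.Tendsto (fun r : ℝ => G ((s:ℂ) + r * Complex.I))
      (nhdsWithin 0 (Set.Ioi 0)) (nhds 0) := by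
    apply Filter.Tendsto.congr' _ tendsto_const_nhds
    filter_upwards [self_mem_nhdsWithin] with r hr
    simp only [Set.mem_Ioi] at hr
    refine (hGupper _ ?_).symm
    simp only [Complex.add_im, Complex.ofReal_im, Complex.mul_im, Complex.ofReal_re,
      Complex.I_im, Complex.I_re, Complex.ofReal_im]
    nlinarith
  exact tendsto_nhds_unique h1 h2
end Aux

/-- Let `D` be a positive self-adjoint operator on a Hilbert space `H` and let
`e z = e^{izD}` (for `Im z ≥ 0`) be the family of bounded operators obtained from the Borel
functional calculus of `D`, characterized by its spectral data as follows: for each vector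
`ξ` the diagonal spectral measure `μ ξ = ⟨P(·)ξ, ξ⟩` is a finite positive measure supported
in `[0,∞)` with total mass `‖ξ‖²` and `⟨e^{izD} ξ, ξ⟩ = ∫ e^{izλ} dμ_ξ(λ)`; moreover
`e^{i·0·D} = 1`, `e^{izD} e^{iwD} = e^{i(z+w)D}` and `(e^{izD})* = e^{i(-z̄)D}`.
In particular `t ↦ e^{itD}` (t real) is the unitary one-parameter group generated by `D`.
If `ξ, η ∈ H`, `δ > 0` and `⟨e^{itD} ξ, η⟩ = 0` for all real `t ∈ (-δ, δ)`, then
`⟨e^{itD} ξ, η⟩ = 0` for all real `t`. -/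
theorem statement5 (e : ℂ → (H →L[ℂ] H)) (μ : H → Measure ℝ)
    (hfin : ∀ ξ : H, IsFiniteMeasure (μ ξ))
    (hsupp : ∀ ξ : H, μ ξ (Set.Iio 0) = 0)
    (htotal : ∀ ξ : H, μ ξ Set.univ = ENNReal.ofReal (‖ξ‖ ^ 2))
    (hone : e 0 = 1)
    (hdiag : ∀ (ξ : H) (z : ℂ), 0 ≤ z.im →
      (inner ℂ (e z ξ) ξ : ℂ) = ∫ l : ℝ, Complex.exp (Complex.I * z * (l : ℂ)) ∂(μ ξ))
    (hsemigroup : ∀ z w : ℂ, 0 ≤ z.im → 0 ≤ w.im → e (z + w) = e z ∘L e w)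
    (hadjoint : ∀ z : ℂ, 0 ≤ z.im → adjoint (e z) = e (-(starRingEnd ℂ z)))
    (ξ η : H) (δ : ℝ) (hδ : 0 < δ)
    (hvanish : ∀ t : ℝ, -δ < t → t < δ → (inner ℂ (e (t : ℂ) ξ) η : ℂ) = 0) :
    ∀ t : ℝ, (inner ℂ (e (t : ℂ) ξ) η : ℂ) = 0 := by
  haveI := hfin (ξ + η)
  haveI := hfin (ξ - η)
  haveI := hfin (ξ + Complex.I • η)
  haveI := hfin (ξ - Complex.I • η)
  have key : ∀ z : ℂ, 0 ≤ z.im → (inner ℂ (e z ξ) η : ℂ) =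
      (4:ℂ)⁻¹ * ((∫ l : ℝ, Complex.exp (Complex.I * z * l) ∂(μ (ξ + η)))
        - (∫ l : ℝ, Complex.exp (Complex.I * z * l) ∂(μ (ξ - η)))
        - Complex.I * (∫ l : ℝ, Complex.exp (Complex.I * z * l) ∂(μ (ξ + Complex.I • η)))
        + Complex.I * (∫ l : ℝ, Complex.exp (Complex.I * z * l) ∂(μ (ξ - Complex.I • η)))) := by
    intro z hz
    rw [← hdiag (ξ + η) z hz, ← hdiag (ξ - η) z hz, ← hdiag (ξ + Complex.I • η) z hz,
      ← hdiag (ξ - Complex.I • η) z hz]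
    simp only [map_add, map_sub, _root_.map_smul, inner_add_left, inner_add_right, inner_sub_left,
      inner_sub_right, inner_smul_left, inner_smul_right, Complex.conj_I, smul_eq_mul]
    ring_nf
    simp only [Complex.I_sq]
    ring
  set G : ℂ → ℂ := fun z =>
      (4:ℂ)⁻¹ * ((∫ l : ℝ, Complex.exp (Complex.I * z * l) ∂(μ (ξ + η)))
        - (∫ l : ℝ, Complex.exp (Complex.I * z * l) ∂(μ (ξ - η)))
        - Complex.I * (∫ l : ℝ, Complex.exp (Complex.I * z * l) ∂(μ (ξ + Complex.I • η)))
        + Complex.I * (∫ l : ℝ, Complex.exp (Complex.I * z * l) ∂(μ (ξ - Complex.I • η))))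
    with hG_def
  have hGdiff : ∀ z : ℂ, 0 < z.im → DifferentiableAt ℂ G z := by
    intro z hz
    apply DifferentiableAt.const_mul
    exact (((auxT_diff _ (hsupp _) hz).sub (auxT_diff _ (hsupp _) hz)).sub
      ((auxT_diff _ (hsupp _) hz).const_mul _)).add ((auxT_diff _ (hsupp _) hz).const_mul _)
  have hGcont : ContinuousOn G {z : ℂ | 0 ≤ z.im} := by
    exact continuousOn_const.mul ((((auxT_cont _ (hsupp _)).sub (auxT_cont _ (hsupp _))).sub
      (continuousOn_const.mul (auxT_cont _ (hsupp _)))).add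
      (continuousOn_const.mul (auxT_cont _ (hsupp _))))
  set M : ℝ := (μ (ξ + η) Set.univ).toReal + (μ (ξ - η) Set.univ).toReal
    + (μ (ξ + Complex.I • η) Set.univ).toReal + (μ (ξ - Complex.I • η) Set.univ).toReal
    with hM_def
  have hGbdd : ∀ z : ℂ, 0 ≤ z.im → ‖G z‖ ≤ M := by
    intro z hz
    have hA := auxT_bound (μ (ξ + η)) (hsupp _) hz
    have hB := auxT_bound (μ (ξ - η)) (hsupp _) hz
    have hC := auxT_bound (μ (ξ + Complex.I • η)) (hsupp _) hz
    have hD := auxT_bound (μ (ξ - Complex.I • η)) (hsupp _) hz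
    set A := ∫ l : ℝ, Complex.exp (Complex.I * z * l) ∂(μ (ξ + η))
    set B := ∫ l : ℝ, Complex.exp (Complex.I * z * l) ∂(μ (ξ - η))
    set C := ∫ l : ℝ, Complex.exp (Complex.I * z * l) ∂(μ (ξ + Complex.I • η))
    set D := ∫ l : ℝ, Complex.exp (Complex.I * z * l) ∂(μ (ξ - Complex.I • η))
    have e1 : ‖Complex.I * C‖ = ‖C‖ := by rw [norm_mul, Complex.norm_I, one_mul]
    have e2 : ‖Complex.I * D‖ = ‖D‖ := by rw [norm_mul, Complex.norm_I, one_mul]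
    have hX : ‖A - B - Complex.I * C + Complex.I * D‖ ≤ ‖A‖ + ‖B‖ + ‖C‖ + ‖D‖ := by
      calc ‖A - B - Complex.I * C + Complex.I * D‖
          ≤ ‖A - B - Complex.I * C‖ + ‖Complex.I * D‖ := norm_add_le _ _
        _ ≤ (‖A - B‖ + ‖Complex.I * C‖) + ‖Complex.I * D‖ := by
            gcongr
            exact norm_sub_le _ _
        _ ≤ ((‖A‖ + ‖B‖) + ‖C‖) + ‖D‖ := by
            rw [e1, e2]
            gcongr
            exact norm_sub_le _ _
    have h4 : ‖(4:ℂ)⁻¹‖ ≤ 1 := by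
      rw [norm_inv]
      rw [show ‖(4:ℂ)‖ = 4 by
        norm_num]
      norm_num
    calc ‖G z‖ = ‖(4:ℂ)⁻¹‖ * ‖A - B - Complex.I * C + Complex.I * D‖ := by
          rw [hG_def]; exact norm_mul _ _
      _ ≤ 1 * (‖A‖ + ‖B‖ + ‖C‖ + ‖D‖) := by
          apply mul_le_mul h4 hX (norm_nonneg _) zero_le_one
      _ = ‖A‖ + ‖B‖ + ‖C‖ + ‖D‖ := one_mul _
      _ ≤ M := by rw [hM_def]; gcongr
  have hG0 : ∀ r : ℝ, -δ < r → r < δ → G (r : ℂ) = 0 := by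
    intro r h1 h2
    have h3 := hvanish r h1 h2
    rw [key r (by simp)] at h3
    simpa only [hG_def] using h3
  intro t
  have hfinal := vanish_on_line G M hGdiff hGcont hGbdd hδ hG0 t
  rw [key t (by simp)]
  simpa only [hG_def] using hfinal
end
end
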